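/- Let L > 0, γ̄ ∈ [1, 1 + √2], T̄ ∈ (0,∞], and let γ : [0,∞) → [1, γ̄]. Let N ∈ (0, L·T̄²/2), f ∈ F_L, η ∈ E_N, u = f + η. For t > 0 define Q(t, T, σ) = u(t − σ) − u(t) + ((u(t) − u(t − T))/T)·σ, the noise estimate N̂(t) = (1/2)·sup over T ∈ (0, T̄] with T ≤ t and σ ∈ [0, T] of (|Q(t, T, σ)| − L·σ·(T − σ)/2), and the adaptive time difference T̂(t) = min{t, T̄, 2·γ(t)·√(N̂(t)/L)}. Then for every t ≥ √(2N/L) with T̂(t) > 0, the output y(t) = (u(t) − u(t − T̂(t)))/T̂(t) satisfies |y(t) − ḟ(t)| ≤ 2·√(2·N·L). -/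

import Mathlib

open Set Filter Topology

/-- `f ∈ F_L`: `f : [0,∞) → ℝ` is differentiable with derivative `f'`
that is Lipschitz continuous with constant `L` on `[0,∞)`. -/
def IsFL (L : ℝ) (f f' : ℝ → ℝ) : Prop :=
  (∀ t ∈ Set.Ici (0:ℝ), HasDerivWithinAt f (f' t) (Set.Ici 0) t) ∧
  ∀ s ∈ Set.Ici (0:ℝ), ∀ t ∈ Set.Ici (0:ℝ), |f' s - f' t| ≤ L * |s - t|

/-- `η ∈ E_N`: measurable noise bounded by `N` on `[0,∞)`. -/
def IsEN (N : ℝ) (η : ℝ → ℝ) : Prop :=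
  Measurable η ∧ ∀ t ∈ Set.Ici (0:ℝ), |η t| ≤ N

/-- `f ∈ F_L^R`: member of `F_L` with `|f(0)| ≤ R` and `|ḟ(0)| ≤ R`. -/
def IsFLR (L R : ℝ) (f f' : ℝ → ℝ) : Prop :=
  IsFL L f f' ∧ |f 0| ≤ R ∧ |f' 0| ≤ R

/-- A differentiator is causal if its output at time `T` depends only on the
input on `[0, T]`. -/
def Causal (D : (ℝ → ℝ) → ℝ → ℝ) : Prop :=
  ∀ u₁ u₂ T, (∀ t ∈ Set.Icc (0:ℝ) T, u₁ t = u₂ t) → D u₁ T = D u₂ T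



lemma abs_sub'' (a b : ℝ) : |a - b| ≤ |a| + |b| := by
  calc |a - b| = |a + -b| := by rw [sub_eq_add_neg]
    _ ≤ |a| + |-b| := abs_add_le _ _
    _ = |a| + |b| := by rw [abs_neg]

lemma fl_deriv_cont {L : ℝ} {f f' : ℝ → ℝ} (hf : IsFL L f f') (hL : 0 ≤ L) {a b : ℝ}
    (ha : 0 ≤ a) : ContinuousOn f' (Set.Icc a b) := by
  have h : LipschitzOnWith (Real.toNNReal L) f' (Set.Icc a b) := by
    apply LipschitzOnWith.of_dist_le_mul
    intro x hx y hy
    rw [Real.dist_eq, Real.dist_eq, Real.coe_toNNReal _ hL]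
    exact hf.2 x (le_trans ha hx.1) y (le_trans ha hy.1)
  exact h.continuousOn

lemma fl_cont {L : ℝ} {f f' : ℝ → ℝ} (hf : IsFL L f f') {a b : ℝ}
    (ha : 0 ≤ a) : ContinuousOn f (Set.Icc a b) := by
  intro x hx
  exact ((hf.1 x (le_trans ha hx.1)).continuousWithinAt).mono
    (fun y hy => le_trans ha hy.1)

lemma fl_ftc {L : ℝ} {f f' : ℝ → ℝ} (hf : IsFL L f f') (hL : 0 ≤ L) {a b : ℝ}
    (ha : 0 ≤ a) (hab : a ≤ b) : ∫ s in a..b, f' s = f b - f a := by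
  apply intervalIntegral.integral_eq_sub_of_hasDeriv_right_of_le hab (fl_cont hf ha)
  · intro x hx
    have hx0 : (0:ℝ) < x := lt_of_le_of_lt ha hx.1
    exact ((hf.1 x hx0.le).hasDerivAt (Ici_mem_nhds hx0)).hasDerivWithinAt
  · exact ((fl_deriv_cont hf hL ha).mono (by rw [uIcc_of_le hab])).intervalIntegrable

lemma fl_taylor_right {L : ℝ} {f f' : ℝ → ℝ} (hf : IsFL L f f') (hL : 0 ≤ L) {a b : ℝ}
    (ha : 0 ≤ a) (hab : a ≤ b) :
    |f b - f a - f' b * (b - a)| ≤ L * (b - a)^2 / 2 := by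
  have hb : (0:ℝ) ≤ b := le_trans ha hab
  have hcont : ContinuousOn f' (Set.Icc a b) := fl_deriv_cont hf hL ha
  have hint : IntervalIntegrable f' MeasureTheory.volume a b :=
    (hcont.mono (by rw [uIcc_of_le hab])).intervalIntegrable
  have key : f b - f a - f' b * (b - a) = ∫ s in a..b, (f' s - f' b) := by
    rw [intervalIntegral.integral_sub hint intervalIntegrable_const,
      fl_ftc hf hL ha hab, intervalIntegral.integral_const]
    simp [smul_eq_mul]; ring
  rw [key]
  have h1 : |∫ s in a..b, (f' s - f' b)| ≤ ∫ s in a..b, |f' s - f' b| :=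
    intervalIntegral.abs_integral_le_integral_abs hab
  have hint2 : IntervalIntegrable (fun s => |f' s - f' b|) MeasureTheory.volume a b :=
    (((hcont.sub continuousOn_const).abs).mono (by rw [uIcc_of_le hab])).intervalIntegrable
  have hint3 : IntervalIntegrable (fun s => L * (b - s)) MeasureTheory.volume a b :=
    ((continuous_const.mul (continuous_const.sub continuous_id)).continuousOn.mono
      (by rw [uIcc_of_le hab])).intervalIntegrable
  have h2 : ∫ s in a..b, |f' s - f' b| ≤ ∫ s in a..b, L * (b - s) := by
    apply intervalIntegral.integral_mono_on hab hint2 hint3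
    intro s hs
    have := hf.2 s (le_trans ha hs.1) b hb
    calc |f' s - f' b| ≤ L * |s - b| := this
      _ = L * (b - s) := by rw [abs_of_nonpos (by linarith [hs.2])]; ring
  have h3 : ∫ s in a..b, L * (b - s) = L * (b - a)^2 / 2 := by
    have e : (fun s => L * (b - s)) = fun s => L * b - L * s := by funext s; ring
    have hiS : IntervalIntegrable (fun s : ℝ => L * s) MeasureTheory.volume a b :=
      (by fun_prop : Continuous fun s : ℝ => L * s).intervalIntegrable _ _
    rw [e, intervalIntegral.integral_sub intervalIntegrable_const hiS,
      intervalIntegral.integral_const, intervalIntegral.integral_const_mul, integral_id]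
    simp [smul_eq_mul]; ring
  linarith

lemma fl_taylor_left {L : ℝ} {f f' : ℝ → ℝ} (hf : IsFL L f f') (hL : 0 ≤ L) {a b : ℝ}
    (ha : 0 ≤ a) (hab : a ≤ b) :
    |f b - f a - f' a * (b - a)| ≤ L * (b - a)^2 / 2 := by
  have hcont : ContinuousOn f' (Set.Icc a b) := fl_deriv_cont hf hL ha
  have hint : IntervalIntegrable f' MeasureTheory.volume a b :=
    (hcont.mono (by rw [uIcc_of_le hab])).intervalIntegrable
  have key : f b - f a - f' a * (b - a) = ∫ s in a..b, (f' s - f' a) := by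
    rw [intervalIntegral.integral_sub hint intervalIntegrable_const,
      fl_ftc hf hL ha hab, intervalIntegral.integral_const]
    simp [smul_eq_mul]; ring
  rw [key]
  have h1 : |∫ s in a..b, (f' s - f' a)| ≤ ∫ s in a..b, |f' s - f' a| :=
    intervalIntegral.abs_integral_le_integral_abs hab
  have hint2 : IntervalIntegrable (fun s => |f' s - f' a|) MeasureTheory.volume a b :=
    (((hcont.sub continuousOn_const).abs).mono (by rw [uIcc_of_le hab])).intervalIntegrable
  have hint3 : IntervalIntegrable (fun s => L * (s - a)) MeasureTheory.volume a b :=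
    ((continuous_const.mul (continuous_id.sub continuous_const)).continuousOn.mono
      (by rw [uIcc_of_le hab])).intervalIntegrable
  have h2 : ∫ s in a..b, |f' s - f' a| ≤ ∫ s in a..b, L * (s - a) := by
    apply intervalIntegral.integral_mono_on hab hint2 hint3
    intro s hs
    have := hf.2 s (le_trans ha hs.1) a ha
    calc |f' s - f' a| ≤ L * |s - a| := this
      _ = L * (s - a) := by rw [abs_of_nonneg (by linarith [hs.1])]
  have h3 : ∫ s in a..b, L * (s - a) = L * (b - a)^2 / 2 := by
    have e : (fun s => L * (s - a)) = fun s => L * s - L * a := by funext s; ring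
    have hiS : IntervalIntegrable (fun s : ℝ => L * s) MeasureTheory.volume a b :=
      (by fun_prop : Continuous fun s : ℝ => L * s).intervalIntegrable _ _
    rw [e, intervalIntegral.integral_sub hiS intervalIntegrable_const,
      intervalIntegral.integral_const, intervalIntegral.integral_const_mul, integral_id]
    simp [smul_eq_mul]; ring
  linarith

lemma fl_interp {L : ℝ} {f f' : ℝ → ℝ} (hf : IsFL L f f') (hL : 0 ≤ L) {a x b : ℝ}
    (ha : 0 ≤ a) (hax : a ≤ x) (hxb : x ≤ b) :
    |f x - f b + ((f b - f a) / (b - a)) * (b - x)| ≤ L * (b - x) * (x - a) / 2 := by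
  rcases eq_or_lt_of_le (hax.trans hxb) with hab | hab
  · have hxb' : x = b := le_antisymm hxb (hab ▸ hax)
    subst hxb'
    simp
  · have hba : (0:ℝ) < b - a := by linarith
    have hA : |f x - f a - f' x * (x - a)| ≤ L * (x - a)^2 / 2 :=
      fl_taylor_right hf hL ha hax
    have hB : |f b - f x - f' x * (b - x)| ≤ L * (b - x)^2 / 2 :=
      fl_taylor_left hf hL (le_trans ha hax) hxb
    have hid : f x - f b + ((f b - f a) / (b - a)) * (b - x) =
        ((b - x) * (f x - f a - f' x * (x - a)) - (x - a) * (f b - f x - f' x * (b - x)))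
          / (b - a) := by
      field_simp
      ring
    rw [hid, abs_div, abs_of_pos hba, div_le_iff₀ hba]
    have h1 : |(b - x) * (f x - f a - f' x * (x - a)) -
        (x - a) * (f b - f x - f' x * (b - x))| ≤
        (b - x) * |f x - f a - f' x * (x - a)| + (x - a) * |f b - f x - f' x * (b - x)| := by
      calc _ ≤ |(b - x) * (f x - f a - f' x * (x - a))| +
            |(x - a) * (f b - f x - f' x * (b - x))| := abs_sub'' _ _
        _ = _ := by
            rw [abs_mul, abs_mul, abs_of_nonneg (by linarith : (0:ℝ) ≤ b - x),
              abs_of_nonneg (by linarith : (0:ℝ) ≤ x - a)]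
    nlinarith [mul_le_mul_of_nonneg_left hA (by linarith : (0:ℝ) ≤ b - x),
      mul_le_mul_of_nonneg_left hB (by linarith : (0:ℝ) ≤ x - a)]

lemma crude_bound {L N : ℝ} {f f' η u : ℝ → ℝ} (hf : IsFL L f f') (hL : 0 ≤ L)
    (hη : ∀ s ∈ Set.Ici (0:ℝ), |η s| ≤ N) (hu : u = f + η) {t T : ℝ}
    (hT : 0 < T) (hTt : T ≤ t) :
    |(u t - u (t - T)) / T - f' t| ≤ L * T / 2 + 2 * N / T := by
  have ht0 : (0:ℝ) ≤ t - T := by linarith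
  have htay := fl_taylor_right hf hL ht0 (by linarith : t - T ≤ t)
  rw [show t - (t - T) = T by ring] at htay
  have hη1 := hη t (by simp only [Set.mem_Ici]; linarith)
  have hη2 := hη (t - T) ht0
  have hrw : (u t - u (t - T)) / T - f' t =
      ((f t - f (t - T) - f' t * T) + (η t - η (t - T))) / T := by
    rw [hu]; simp only [Pi.add_apply]; field_simp; ring
  rw [hrw, abs_div, abs_of_pos hT,
    show L * T / 2 + 2 * N / T = (L * T^2 / 2 + 2 * N) / T by field_simp]
  gcongr
  calc |(f t - f (t - T) - f' t * T) + (η t - η (t - T))|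
      ≤ |f t - f (t - T) - f' t * T| + |η t - η (t - T)| := abs_add_le _ _
    _ ≤ L * T^2 / 2 + 2 * N := by
        have := abs_sub'' (η t) (η (t - T)); linarith

set_option maxHeartbeats 1000000 in
theorem stmt17 (L γbar : ℝ) (hL : 0 < L)
    (hγbar : 1 ≤ γbar) (hγbar' : γbar ≤ 1 + Real.sqrt 2)
    (Tbar : EReal) (hTbar : 0 < Tbar)
    (γ : ℝ → ℝ) (hγ : ∀ t : ℝ, γ t ∈ Set.Icc 1 γbar)
    (N : ℝ) (hN : 0 < N) (hNTbar : ((2 * N : ℝ) : EReal) < (L : ℝ) * Tbar * Tbar)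
    (f f' η u : ℝ → ℝ) (hf : IsFL L f f') (hη : IsEN N η) (hu : u = f + η)
    (t : ℝ) (ht : Real.sqrt (2 * N / L) ≤ t)
    (Nhat : ℝ)
    (hNhat : Nhat = (1/2) * sSup { v : ℝ | ∃ T σ : ℝ, 0 < T ∧
        (T : EReal) ≤ Tbar ∧ T ≤ t ∧ 0 ≤ σ ∧ σ ≤ T ∧
        v = |u (t - σ) - u t + ((u t - u (t - T)) / T) * σ| - L * σ * (T - σ) / 2 })
    (That : ℝ)
    (hThat : (That : EReal) =
      min (min (t : EReal) Tbar) ((2 * γ t * Real.sqrt (Nhat / L) : ℝ) : EReal))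
    (hpos : 0 < That) :
    |(u t - u (t - That)) / That - f' t| ≤ 2 * Real.sqrt (2 * N * L) := by
  set S : Set ℝ := { v : ℝ | ∃ T σ : ℝ, 0 < T ∧
        (T : EReal) ≤ Tbar ∧ T ≤ t ∧ 0 ≤ σ ∧ σ ≤ T ∧
        v = |u (t - σ) - u t + ((u t - u (t - T)) / T) * σ| - L * σ * (T - σ) / 2 }
    with hSdef
  have hγ1 : 1 ≤ γ t := (hγ t).1
  have hγ2 : γ t ≤ γbar := (hγ t).2
  have h1 : That ≤ t := by
    have h : (That : EReal) ≤ (t : EReal) :=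
      hThat ▸ le_trans (min_le_left _ _) (min_le_left _ _)
    exact_mod_cast h
  have h2 : That ≤ 2 * γ t * Real.sqrt (Nhat / L) := by
    have h : (That : EReal) ≤ ((2 * γ t * Real.sqrt (Nhat / L) : ℝ) : EReal) :=
      hThat ▸ min_le_right _ _
    exact_mod_cast h
  have ht0 : (0:ℝ) < t := lt_of_lt_of_le hpos h1
  have hNhat0 : 0 < Nhat := by
    by_contra h
    push_neg at h
    have hz : Real.sqrt (Nhat / L) = 0 :=
      Real.sqrt_eq_zero'.mpr (div_nonpos_of_nonpos_of_nonneg h hL.le)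
    rw [hz, mul_zero] at h2
    linarith
  have hsqNL : Real.sqrt (Nhat / L) ^ 2 = Nhat / L :=
    Real.sq_sqrt (div_nonneg hNhat0.le hL.le)
  set Ts : ℝ := Real.sqrt (2 * N / L) with hTdef
  have hT2 : Ts ^ 2 = 2 * N / L := Real.sq_sqrt (by positivity)
  have hT0 : 0 < Ts := Real.sqrt_pos.mpr (by positivity)
  have hTt : Ts ≤ t := ht
  have hLT : L * Ts ^ 2 = 2 * N := by rw [hT2]; field_simp
  have hTb : ((Ts : ℝ) : EReal) ≤ Tbar := by
    by_cases htop : Tbar = ⊤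
    · simp [htop]
    · have hbot : Tbar ≠ ⊥ := ne_bot_of_gt hTbar
      set b := Tbar.toReal with hbdef
      have hb : (b : EReal) = Tbar := EReal.coe_toReal htop hbot
      rw [← hb] at hTbar hNTbar ⊢
      have hb0 : (0:ℝ) < b := by exact_mod_cast hTbar
      have h2b : 2 * N < L * b * b := by
        rw [← EReal.coe_mul, ← EReal.coe_mul] at hNTbar
        exact_mod_cast hNTbar
      have hle : Ts ≤ b := by
        rw [hTdef, show b = Real.sqrt (b ^ 2) from (Real.sqrt_sq hb0.le).symm]
        exact Real.sqrt_le_sqrt (by rw [div_le_iff₀ hL]; nlinarith)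
      exact_mod_cast hle
  have hs : Real.sqrt (2 * N * L) = L * Ts := by
    rw [show 2 * N * L = (L * Ts) ^ 2 by nlinarith [hLT], Real.sqrt_sq (by positivity)]
  -- boundedness of S
  obtain ⟨C, hC⟩ := (isCompact_Icc : IsCompact (Icc (0:ℝ) t)).exists_bound_of_continuousOn
    (fl_cont hf le_rfl)
  have huB : ∀ s ∈ Icc (0:ℝ) t, |u s| ≤ C + N := by
    intro s hs
    rw [hu]
    simp only [Pi.add_apply]
    calc |f s + η s| ≤ |f s| + |η s| := abs_add_le _ _
      _ ≤ C + N := add_le_add (by simpa using hC s hs) (hη.2 s hs.1)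
  have hSbdd : BddAbove S := by
    refine ⟨4 * (C + N), fun v hv => ?_⟩
    obtain ⟨T, σ, hT0', hTTb, hTt', hσ0, hσT, hv⟩ := hv
    have hm1 : t - σ ∈ Icc (0:ℝ) t := ⟨by linarith, by linarith⟩
    have hm2 : t ∈ Icc (0:ℝ) t := ⟨ht0.le, le_rfl⟩
    have hm3 : t - T ∈ Icc (0:ℝ) t := ⟨by linarith, by linarith⟩
    have hd : |u t - u (t - T)| ≤ 2 * (C + N) := by
      have := abs_sub'' (u t) (u (t - T))
      have h1 := huB t hm2; have h2 := huB (t - T) hm3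
      linarith
    have hlast : |(u t - u (t - T)) / T * σ| ≤ 2 * (C + N) := by
      rw [abs_mul, abs_div, abs_of_pos hT0', abs_of_nonneg hσ0]
      calc |u t - u (t - T)| / T * σ ≤ |u t - u (t - T)| / T * T := by
            apply mul_le_mul_of_nonneg_left hσT (by positivity)
        _ = |u t - u (t - T)| := div_mul_cancel₀ _ hT0'.ne'
        _ ≤ 2 * (C + N) := hd
    have hQ : |u (t - σ) - u t + (u t - u (t - T)) / T * σ| ≤ 4 * (C + N) := by
      calc |u (t - σ) - u t + (u t - u (t - T)) / T * σ|
          ≤ |u (t - σ) - u t| + |(u t - u (t - T)) / T * σ| := abs_add_le _ _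
        _ ≤ (|u (t - σ)| + |u t|) + 2 * (C + N) :=
            add_le_add (abs_sub'' _ _) hlast
        _ ≤ 4 * (C + N) := by
            have h1 := huB (t - σ) hm1; have h2 := huB t hm2; linarith
    have hnn : 0 ≤ L * σ * (T - σ) / 2 := by
      apply div_nonneg _ (by norm_num)
      exact mul_nonneg (mul_nonneg hL.le hσ0) (by linarith)
    rw [hv]; linarith
  -- Nhat ≤ N
  have hNN : Nhat ≤ N := by
    have hsup : sSup S ≤ 2 * N := by
      apply Real.sSup_le _ (by linarith)
      intro v hv
      obtain ⟨T, σ, hT0', hTTb, hTt', hσ0, hσT, hv⟩ := hv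
      have h0tT : (0:ℝ) ≤ t - T := by linarith
      have hQf := fl_interp hf hL.le (a := t - T) (x := t - σ) (b := t) h0tT
        (by linarith) (by linarith)
      rw [show t - (t - T) = T by ring, show t - (t - σ) = σ by ring,
        show (t - σ) - (t - T) = T - σ by ring] at hQf
      have hη1 : |η (t - σ)| ≤ N := hη.2 _ (by simp only [Set.mem_Ici]; linarith)
      have hη2 : |η t| ≤ N := hη.2 _ (by simp only [Set.mem_Ici]; linarith)
      have hη3 : |η (t - T)| ≤ N := hη.2 _ (by simp only [Set.mem_Ici]; linarith)
      have hQη : |η (t - σ) - η t + ((η t - η (t - T)) / T) * σ| ≤ 2 * N := by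
        rw [← mul_le_mul_iff_of_pos_right hT0']
        have e : |η (t - σ) - η t + ((η t - η (t - T)) / T) * σ| * T =
            |(η (t - σ) - η t + ((η t - η (t - T)) / T) * σ) * T| := by
          rw [abs_mul, abs_of_pos hT0']
        have e2 : (η (t - σ) - η t + ((η t - η (t - T)) / T) * σ) * T =
            η (t - σ) * T - η t * (T - σ) - η (t - T) * σ := by
          field_simp; ring
        rw [e, e2]
        have b1 : |η (t - σ) * T| ≤ N * T := by
          rw [abs_mul, abs_of_pos hT0']
          exact mul_le_mul_of_nonneg_right hη1 hT0'.le
        have b2 : |η t * (T - σ)| ≤ N * (T - σ) := by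
          rw [abs_mul, abs_of_nonneg (by linarith : (0:ℝ) ≤ T - σ)]
          exact mul_le_mul_of_nonneg_right hη2 (by linarith)
        have b3 : |η (t - T) * σ| ≤ N * σ := by
          rw [abs_mul, abs_of_nonneg hσ0]
          exact mul_le_mul_of_nonneg_right hη3 hσ0
        calc |η (t - σ) * T - η t * (T - σ) - η (t - T) * σ|
            ≤ |η (t - σ) * T - η t * (T - σ)| + |η (t - T) * σ| := abs_sub'' _ _
          _ ≤ |η (t - σ) * T| + |η t * (T - σ)| + |η (t - T) * σ| := by
              linarith [abs_sub'' (η (t - σ) * T) (η t * (T - σ))]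
          _ ≤ 2 * N * T := by linarith
      have hsplit : u (t - σ) - u t + ((u t - u (t - T)) / T) * σ =
          (f (t - σ) - f t + ((f t - f (t - T)) / T) * σ) +
          (η (t - σ) - η t + ((η t - η (t - T)) / T) * σ) := by
        rw [hu]; simp only [Pi.add_apply]; ring
      rw [hv, hsplit]
      have htr := abs_add_le (f (t - σ) - f t + ((f t - f (t - T)) / T) * σ)
        (η (t - σ) - η t + ((η t - η (t - T)) / T) * σ)
      linarith
    linarith [hNhat ▸ (by linarith : (1/2 : ℝ) * sSup S ≤ N)]
  -- case split
  rcases lt_or_ge That Ts with hcase | hcase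
  · -- small That: That equals the adaptive term
    have hThatc : That = 2 * γ t * Real.sqrt (Nhat / L) := by
      have hlt : (That : EReal) < min (t : EReal) Tbar := by
        apply lt_min
        · exact_mod_cast lt_of_lt_of_le hcase hTt
        · exact lt_of_lt_of_le (by exact_mod_cast hcase) hTb
      rcases le_total (min (t : EReal) Tbar)
          ((2 * γ t * Real.sqrt (Nhat / L) : ℝ) : EReal) with hmc | hmc
      · rw [min_eq_left hmc] at hThat
        exact absurd hThat (ne_of_lt hlt)
      · rw [min_eq_right hmc] at hThat
        exact_mod_cast hThat
    have hLs : L * Real.sqrt (Nhat / L) ^ 2 = Nhat := by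
      rw [hsqNL]; field_simp
    have hquad : 4 * Nhat ≤ L * That ^ 2 := by
      have hg : 1 ≤ γ t * γ t := by nlinarith
      rw [hThatc]
      nlinarith [hLs, hNhat0]
    have hmem : |u (t - That) - u t + ((u t - u (t - Ts)) / Ts) * That| -
        L * That * (Ts - That) / 2 ∈ S :=
      ⟨Ts, That, hT0, hTb, hTt, hpos.le, hcase.le, rfl⟩
    have hle : |u (t - That) - u t + ((u t - u (t - Ts)) / Ts) * That| -
        L * That * (Ts - That) / 2 ≤ 2 * Nhat := by
      have h := le_csSup hSbdd hmem
      linarith [hNhat]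
    have hy : That * ((u t - u (t - That)) / That) = u t - u (t - That) := by
      field_simp
    have hQ0 : u (t - That) - u t + ((u t - u (t - Ts)) / Ts) * That =
        That * ((u t - u (t - Ts)) / Ts - (u t - u (t - That)) / That) := by
      rw [mul_sub, hy]; ring
    have h6 : That * |(u t - u (t - Ts)) / Ts - (u t - u (t - That)) / That| ≤
        2 * Nhat + L * That * (Ts - That) / 2 := by
      have e : That * |(u t - u (t - Ts)) / Ts - (u t - u (t - That)) / That| =
          |That * ((u t - u (t - Ts)) / Ts - (u t - u (t - That)) / That)| := by
        rw [abs_mul, abs_of_pos hpos]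
      rw [e, ← hQ0]
      linarith
    have hcr : |(u t - u (t - Ts)) / Ts - f' t| ≤ L * Ts / 2 + 2 * N / Ts :=
      crude_bound hf hL.le hη.2 hu hT0 hTt
    have h7 : 2 * N / Ts = L * Ts := by
      rw [div_eq_iff hT0.ne']; nlinarith [hLT]
    rw [h7] at hcr
    have habs : |(u t - u (t - That)) / That - f' t| ≤
        |(u t - u (t - That)) / That - (u t - u (t - Ts)) / Ts| +
        |(u t - u (t - Ts)) / Ts - f' t| := abs_sub_le _ _ _
    rw [hs, ← mul_le_mul_iff_of_pos_right hpos]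
    calc |(u t - u (t - That)) / That - f' t| * That
        ≤ (|(u t - u (t - That)) / That - (u t - u (t - Ts)) / Ts| +
          |(u t - u (t - Ts)) / Ts - f' t|) * That :=
          mul_le_mul_of_nonneg_right habs hpos.le
      _ = That * |(u t - u (t - Ts)) / Ts - (u t - u (t - That)) / That| +
          |(u t - u (t - Ts)) / Ts - f' t| * That := by
          rw [abs_sub_comm ((u t - u (t - That)) / That)]; ring
      _ ≤ (2 * Nhat + L * That * (Ts - That) / 2) +
          (L * Ts / 2 + L * Ts) * That :=
          add_le_add h6 (mul_le_mul_of_nonneg_right hcr hpos.le)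
      _ ≤ 2 * (L * Ts) * That := by nlinarith [hquad]
  · -- large That: direct bound
    have hcr : |(u t - u (t - That)) / That - f' t| ≤ L * That / 2 + 2 * N / That :=
      crude_bound hf hL.le hη.2 hu hpos h1
    set q : ℝ := Real.sqrt 2 with hqdef
    set w : ℝ := Real.sqrt (N / L) with hwdef
    have hq2 : q ^ 2 = 2 := Real.sq_sqrt (by norm_num)
    have hq0 : 0 ≤ q := Real.sqrt_nonneg 2
    have hq1 : 1 ≤ q := by nlinarith
    have hq2' : q ≤ 2 := by nlinarith
    have hw2 : w ^ 2 = N / L := Real.sq_sqrt (by positivity)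
    have hw0 : 0 < w := Real.sqrt_pos.mpr (by positivity)
    have hNw : N = L * w ^ 2 := by rw [hw2]; field_simp
    have hTsw : Ts = q * w := by
      rw [hTdef, hqdef, hwdef, show 2 * N / L = 2 * (N / L) by ring,
        Real.sqrt_mul (by norm_num)]
    have hub : That ≤ 2 * (1 + q) * w := by
      calc That ≤ 2 * γ t * Real.sqrt (Nhat / L) := h2
        _ ≤ 2 * (1 + q) * w := by
            apply mul_le_mul _ _ (Real.sqrt_nonneg _) (by positivity)
            · linarith
            · rw [hwdef]
              exact Real.sqrt_le_sqrt (by gcongr)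
    have hlb : q * w ≤ That := hTsw ▸ hcase
    have hf1 : 0 ≤ That - 2 * (q - 1) * w := by nlinarith
    have hf2 : 0 ≤ 2 * (q + 1) * w - That := by linarith
    have hkey : L * That ^ 2 + 4 * N ≤ 4 * (q * (L * w)) * That := by
      nlinarith [mul_nonneg (mul_nonneg hL.le hf1) hf2, hq2, hNw, sq_nonneg w,
        mul_pos hL hw0]
    have hgoal2 : Real.sqrt (2 * N * L) = q * (L * w) := by
      rw [show 2 * N * L = (q * (L * w)) ^ 2 by linear_combination 2*L*hNw - L^2*w^2*hq2, Real.sqrt_sq (by positivity)]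
    calc |(u t - u (t - That)) / That - f' t| ≤ L * That / 2 + 2 * N / That := hcr
      _ = (L * That * That + 4 * N) / (2 * That) := by field_simp; ring
      _ ≤ 2 * (q * (L * w)) := by
          rw [div_le_iff₀ (by linarith : (0:ℝ) < 2 * That)]
          nlinarith [hkey]
      _ = 2 * Real.sqrt (2 * N * L) := by rw [hgoal2]
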